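/- arXiv:2101.12453 — 2 statements merged into one kernel-verified Lean document; each statement's English description precedes it below -/
import Mathlib

section
/- Let c₀,...,cₙ be independent random variables uniformly distributed on [−1,1], with n ≥ 1 and N > 0. Let c = max(|c₀|,...,|c_{n−1}|). Then P(c ≤ |cₙ|·N) = 1 − 1/N + 1/((n+1)N) whenever N ≥ 1; in particular P(c ≤ |cₙ|·N) > 1 − 1/N. -/
open MeasureTheory intervalIntegral

lemma gcont (n : ℕ) (N : ℝ) : Continuous (fun t : ℝ => (min (|t| * N) 1) ^ n) := by
  fun_prop

lemma realint (n : ℕ) (N : ℝ) (hN : 1 ≤ N) :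
    ∫ t in (-1:ℝ)..1, (min (|t| * N) 1) ^ n
      = 2 * (1 - 1 / N + 1 / ((n + 1) * N)) := by
  have hN0 : (0:ℝ) < N := lt_of_lt_of_le one_pos hN
  have hinv : 1 / N ≤ 1 := by
    rw [div_le_one hN0]; exact hN
  have hinv0 : (0:ℝ) < 1 / N := by positivity
  have hint : ∀ a b : ℝ, IntervalIntegrable (fun t : ℝ => (min (|t| * N) 1) ^ n)
      volume a b := fun a b => (gcont n N).intervalIntegrable a b
  have split1 : ∫ t in (-1:ℝ)..1, (min (|t| * N) 1) ^ n
      = (∫ t in (-1:ℝ)..(-(1/N)), (min (|t| * N) 1) ^ n)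
      + (∫ t in (-(1/N):ℝ)..0, (min (|t| * N) 1) ^ n)
      + (∫ t in (0:ℝ)..(1/N), (min (|t| * N) 1) ^ n)
      + (∫ t in (1/N:ℝ)..1, (min (|t| * N) 1) ^ n) := by
    rw [integral_add_adjacent_intervals (hint _ _) (hint _ _),
      integral_add_adjacent_intervals (hint _ _) (hint _ _),
      integral_add_adjacent_intervals (hint _ _) (hint _ _)]
  have e1 : ∫ t in (-1:ℝ)..(-(1/N)), (min (|t| * N) 1) ^ n = 1 - 1/N := by
    rw [integral_congr (g := fun _ => (1:ℝ)) ?_, intervalIntegral.integral_const]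
    · simp; ring
    · intro t ht
      rw [Set.uIcc_of_le (by linarith)] at ht
      obtain ⟨h1, h2⟩ := ht
      have habs : |t| = -t := abs_of_nonpos (by linarith)
      have : 1 ≤ |t| * N := by
        rw [habs]
        calc (1:ℝ) = (1/N) * N := by field_simp
        _ ≤ -t * N := by nlinarith
      simp [min_eq_right this]
  have e4 : ∫ t in (1/N:ℝ)..1, (min (|t| * N) 1) ^ n = 1 - 1/N := by
    rw [integral_congr (g := fun _ => (1:ℝ)) ?_, intervalIntegral.integral_const]
    · simp
    · intro t ht
      rw [Set.uIcc_of_le (by linarith)] at ht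
      obtain ⟨h1, h2⟩ := ht
      have habs : |t| = t := abs_of_nonneg (by linarith)
      have : 1 ≤ |t| * N := by
        rw [habs]
        calc (1:ℝ) = (1/N) * N := by field_simp
        _ ≤ t * N := by nlinarith
      simp [min_eq_right this]
  have e3 : ∫ t in (0:ℝ)..(1/N), (min (|t| * N) 1) ^ n = 1 / ((n + 1) * N) := by
    rw [integral_congr (g := fun t => (t * N) ^ n) ?_]
    · have : ∀ t : ℝ, (t * N)^n = N^n * t^n := fun t => by rw [mul_pow]; ring
      simp_rw [this]
      rw [intervalIntegral.integral_const_mul, integral_pow]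
      field_simp
      rw [pow_succ]
      ring_nf
      rw [inv_pow, mul_right_comm N, mul_inv_cancel₀ hN0.ne', one_mul, mul_inv_cancel₀ (pow_ne_zero _ hN0.ne')]
    · intro t ht
      rw [Set.uIcc_of_le (by linarith)] at ht
      obtain ⟨h1, h2⟩ := ht
      have habs : |t| = t := abs_of_nonneg h1
      have : t * N ≤ 1 := by
        calc t * N ≤ (1/N) * N := by nlinarith
        _ = 1 := by field_simp
      simp [habs, min_eq_left this]
  have e2 : ∫ t in (-(1/N):ℝ)..0, (min (|t| * N) 1) ^ n = 1 / ((n + 1) * N) := by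
    have comp : ∫ t in (-(1/N):ℝ)..0, (min (|t| * N) 1) ^ n
        = ∫ t in (0:ℝ)..(1/N), (min (|t| * N) 1) ^ n := by
      rw [show (∫ t in (0:ℝ)..(1/N), (min (|t| * N) 1) ^ n)
          = ∫ t in (0:ℝ)..(1/N), (min (|(-t)| * N) 1) ^ n by
        apply integral_congr; intro t _; simp [abs_neg]]
      rw [intervalIntegral.integral_comp_neg (fun t => (min (|t| * N) 1) ^ n)]
      norm_num
    rw [comp, e3]
  rw [split1, e1, e2, e3, e4]; ring


lemma mu1_Icc (a : ℝ) (ha : 0 ≤ a) :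
    ((2 : ENNReal)⁻¹ • volume.restrict (Set.Icc (-1 : ℝ) 1)) (Set.Icc (-a) a)
      = ENNReal.ofReal (min a 1) := by
  have h1 : (0:ℝ) ≤ min a 1 := le_min ha zero_le_one
  rw [Measure.smul_apply, Measure.restrict_apply measurableSet_Icc,
    Set.Icc_inter_Icc]
  have : max (-a) (-1 : ℝ) = -(min a 1) := by
    exact max_neg_neg a 1
  rw [this, Real.volume_Icc]
  rw [smul_eq_mul]
  rw [show min a 1 - -(min a 1) = 2 * min a 1 by ring]
  rw [ENNReal.ofReal_mul (by norm_num)]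
  rw [← mul_assoc, show ENNReal.ofReal 2 = 2 by norm_num, ENNReal.inv_mul_cancel (by norm_num) (by norm_num), one_mul]

lemma stmt5_key (n : ℕ) (hn : 1 ≤ n) (N : ℝ) (hN : 1 ≤ N)
    (P : Measure (Fin (n + 1) → ℝ))
    (hP : P = Measure.pi fun _ =>
      (2 : ENNReal)⁻¹ • volume.restrict (Set.Icc (-1 : ℝ) 1)) :
    P {ω | (Finset.univ : Finset (Fin n)).sup'
          ⟨⟨0, hn⟩, Finset.mem_univ _⟩
          (fun i => |ω i.castSucc|) ≤ |ω (Fin.last n)| * N}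
      = ENNReal.ofReal (1 - 1 / N + 1 / ((n + 1) * N)) := by
  have hN0 : (0:ℝ) < N := lt_of_lt_of_le one_pos hN
  set μ1 : Measure ℝ := (2 : ENNReal)⁻¹ • volume.restrict (Set.Icc (-1 : ℝ) 1) with hμ1
  have hfin : IsFiniteMeasure μ1 := by
    constructor
    rw [hμ1, Measure.smul_apply, Measure.restrict_apply MeasurableSet.univ,
      Set.univ_inter, Real.volume_Icc]
    norm_num
    rw [ENNReal.inv_mul_cancel (by norm_num) (by norm_num)]
    exact ENNReal.one_lt_top
  set T : Set (ℝ × (Fin n → ℝ)) :=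
    {p | ∀ j : Fin n, |p.2 j| ≤ |p.1| * N} with hT
  have hTm : MeasurableSet T := by
    rw [hT, Set.setOf_forall]
    exact MeasurableSet.iInter fun j =>
      measurableSet_le (by fun_prop) (by fun_prop)
  have hpre : {ω : Fin (n+1) → ℝ | (Finset.univ : Finset (Fin n)).sup'
        ⟨⟨0, hn⟩, Finset.mem_univ _⟩
        (fun i => |ω i.castSucc|) ≤ |ω (Fin.last n)| * N}
      = (MeasurableEquiv.piFinSuccAbove (fun _ => ℝ) (Fin.last n)) ⁻¹' T := by
    ext ω
    simp only [Set.mem_setOf_eq, Set.mem_preimage, hT,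
      MeasurableEquiv.piFinSuccAbove_apply, Fin.insertNthEquiv,
      Equiv.coe_fn_symm_mk, Fin.succAbove_last, Fin.removeNth,
      Finset.sup'_le_iff, Finset.mem_univ, forall_true_left]
    exact ⟨fun h j => le_trans (Finset.le_sup' (fun i => |ω i.castSucc|) (Finset.mem_univ j)) h,
      fun h => Finset.sup'_le _ _ fun j _ => h j⟩
  have hmp := measurePreserving_piFinSuccAbove (fun _ : Fin (n+1) => μ1) (Fin.last n)
  rw [hP, hpre]
  rw [hmp.measure_preimage hTm.nullMeasurableSet]
  have hprod : (μ1.prod (Measure.pi fun _ : Fin n => μ1)) T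
      = ∫⁻ t, (Measure.pi fun _ : Fin n => μ1) (Prod.mk t ⁻¹' T) ∂μ1 :=
    Measure.prod_apply hTm
  rw [hprod]
  have hinner : ∀ t : ℝ, (Measure.pi fun _ : Fin n => μ1) (Prod.mk t ⁻¹' T)
      = ENNReal.ofReal ((min (|t| * N) 1) ^ n) := by
    intro t
    have hset : Prod.mk t ⁻¹' T
        = Set.pi Set.univ (fun _ : Fin n => Set.Icc (-(|t| * N)) (|t| * N)) := by
      ext x
      simp [hT, abs_le, Set.mem_pi, Pi.le_def, forall_and]
    rw [hset, Measure.pi_pi]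
    rw [Finset.prod_congr rfl (fun j _ => mu1_Icc (|t| * N) (by positivity))]
    rw [Finset.prod_const, Finset.card_univ, Fintype.card_fin,
      ← ENNReal.ofReal_pow (le_min (by positivity) zero_le_one)]
  rw [lintegral_congr hinner]
  rw [hμ1, lintegral_smul_measure]
  have hInt : IntegrableOn (fun t : ℝ => (min (|t| * N) 1) ^ n)
      (Set.Icc (-1 : ℝ) 1) volume := by
    have : Continuous (fun t : ℝ => (min (|t| * N) 1) ^ n) := by fun_prop
    exact this.integrableOn_Icc
  rw [← ofReal_integral_eq_lintegral_ofReal hInt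
    (ae_of_all _ fun t => by positivity)]
  have : ∫ t in Set.Icc (-1:ℝ) 1, (min (|t| * N) 1) ^ n
      = ∫ t in (-1:ℝ)..1, (min (|t| * N) 1) ^ n := by
    rw [MeasureTheory.integral_Icc_eq_integral_Ioc,
      intervalIntegral.integral_of_le (by norm_num)]
  rw [this, realint n N hN, ENNReal.ofReal_mul (by norm_num),
    show ENNReal.ofReal 2 = 2 by norm_num, smul_eq_mul, ← mul_assoc,
    ENNReal.inv_mul_cancel (by norm_num) (by norm_num), one_mul]


/-- with `c₀,…,cₙ` i.i.d. uniform on `[−1,1]` and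
`c = max(|c₀|,…,|c_{n−1}|)`, for `N ≥ 1` one has
`P(c ≤ |cₙ|·N) = 1 − 1/N + 1/((n+1)N) > 1 − 1/N`. -/
theorem stmt5 (n : ℕ) (hn : 1 ≤ n) (N : ℝ) (hN : 1 ≤ N)
    (P : Measure (Fin (n + 1) → ℝ))
    (hP : P = Measure.pi fun _ =>
      (2 : ENNReal)⁻¹ • volume.restrict (Set.Icc (-1 : ℝ) 1)) :
    P {ω | (Finset.univ : Finset (Fin n)).sup'
          ⟨⟨0, hn⟩, Finset.mem_univ _⟩
          (fun i => |ω i.castSucc|) ≤ |ω (Fin.last n)| * N}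
      = ENNReal.ofReal (1 - 1 / N + 1 / ((n + 1) * N)) ∧
    ENNReal.ofReal (1 - 1 / N) <
      P {ω | (Finset.univ : Finset (Fin n)).sup'
          ⟨⟨0, hn⟩, Finset.mem_univ _⟩
          (fun i => |ω i.castSucc|) ≤ |ω (Fin.last n)| * N} := by
  have key := stmt5_key n hn N hN P hP
  refine ⟨key, ?_⟩
  rw [key]
  have hN0 : (0:ℝ) < N := lt_of_lt_of_le one_pos hN
  have h1 : (0:ℝ) < 1 / ((n + 1) * N) := by positivity
  have h2 : (0:ℝ) ≤ 1 - 1 / N := by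
    rw [sub_nonneg, div_le_one hN0]; exact hN
  rw [ENNReal.ofReal_lt_ofReal_iff (by linarith)]
  linarith
end

section
/- The Choi–Lam polynomial f(x,y,z) = x²y² + x²z² + y²z² − 4xyz + 1 is nonnegative on ℝ³, and its real zero set is exactly the four points {(1,1,1), (1,−1,−1), (−1,1,−1), (−1,−1,1)}. -/
lemma cl_key (x y z : ℝ)
    (h : x ^ 2 * y ^ 2 + x ^ 2 * z ^ 2 + y ^ 2 * z ^ 2 - 4 * x * y * z + 1 = 0) :
    x ^ 2 = 1 ∧ y ^ 2 = 1 ∧ z ^ 2 = 1 ∧ x * y * z = 1 := by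
  set a := |x| with hadef
  set b := |y| with hbdef
  set c := |z| with hcdef
  have ha : a ^ 2 = x ^ 2 := sq_abs x
  have hb : b ^ 2 = y ^ 2 := sq_abs y
  have hc : c ^ 2 = z ^ 2 := sq_abs z
  have ha0 : 0 ≤ a := abs_nonneg x
  have hb0 : 0 ≤ b := abs_nonneg y
  have hc0 : 0 ≤ c := abs_nonneg z
  have habc : x * y * z ≤ a * b * c := by
    rw [hadef, hbdef, hcdef, ← abs_mul, ← abs_mul]; exact le_abs_self _
  have hid : (a*b - a*c)^2 + (b*c - 1)^2 + 2*(b*c)*(a-1)^2 + 4*(a*b*c - x*y*z) = 0 := by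
    linear_combination h + (b^2 + c^2) * ha + (x^2 + c^2) * hb + (x^2 + y^2) * hc
  have t1 : 0 ≤ (a*b - a*c)^2 := sq_nonneg _
  have t2 : 0 ≤ (b*c - 1)^2 := sq_nonneg _
  have t3 : 0 ≤ 2*(b*c)*(a-1)^2 := by positivity
  have t4 : 0 ≤ a*b*c - x*y*z := by linarith
  have e2 : (b*c - 1)^2 = 0 := le_antisymm (by linarith) t2
  have hbc : b * c = 1 := by
    have := (pow_eq_zero_iff two_ne_zero).mp e2; linarith
  have e3 : 2*(b*c)*(a-1)^2 = 0 := le_antisymm (by linarith) t3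
  rw [hbc] at e3
  have hA : a = 1 := by
    have h1 : (a-1)^2 = 0 := by linarith
    have := (pow_eq_zero_iff two_ne_zero).mp h1; linarith
  have e1 : (a*b - a*c)^2 = 0 := le_antisymm (by linarith) t1
  have hBC : b = c := by
    have h1 := (pow_eq_zero_iff two_ne_zero).mp e1
    rw [hA] at h1; linarith
  have hB : b = 1 := by nlinarith [sq_nonneg (b - 1)]
  have hC : c = 1 := by rw [← hBC]; exact hB
  have e4 : a*b*c - x*y*z = 0 := by linarith
  refine ⟨by rw [← ha, hA]; norm_num, by rw [← hb, hB]; norm_num,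
    by rw [← hc, hC]; norm_num, ?_⟩
  rw [hA, hB, hC] at e4; linarith

/-- the Choi–Lam polynomial
`f(x,y,z) = x²y² + x²z² + y²z² − 4xyz + 1` is nonnegative on `ℝ³` and its real
zero set is exactly `{(1,1,1), (1,−1,−1), (−1,1,−1), (−1,−1,1)}`. -/
theorem stmt15 :
    (∀ x y z : ℝ,
      0 ≤ x ^ 2 * y ^ 2 + x ^ 2 * z ^ 2 + y ^ 2 * z ^ 2 - 4 * x * y * z + 1) ∧
    {p : ℝ × ℝ × ℝ |
        p.1 ^ 2 * p.2.1 ^ 2 + p.1 ^ 2 * p.2.2 ^ 2 + p.2.1 ^ 2 * p.2.2 ^ 2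
          - 4 * p.1 * p.2.1 * p.2.2 + 1 = 0} =
      {(1, 1, 1), (1, -1, -1), (-1, 1, -1), (-1, -1, 1)} := by
  constructor
  · intro x y z
    set a := |x| with hadef
    set b := |y| with hbdef
    set c := |z| with hcdef
    have ha : a ^ 2 = x ^ 2 := sq_abs x
    have hb : b ^ 2 = y ^ 2 := sq_abs y
    have hc : c ^ 2 = z ^ 2 := sq_abs z
    have hb0 : 0 ≤ b := abs_nonneg y
    have hc0 : 0 ≤ c := abs_nonneg z
    have habc : x * y * z ≤ a * b * c := by
      rw [hadef, hbdef, hcdef, ← abs_mul, ← abs_mul]; exact le_abs_self _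
    have hid : x ^ 2 * y ^ 2 + x ^ 2 * z ^ 2 + y ^ 2 * z ^ 2 - 4 * x * y * z + 1
        = (a*b - a*c)^2 + (b*c - 1)^2 + 2*(b*c)*(a-1)^2 + 4*(a*b*c - x*y*z) := by
      linear_combination (-(b^2) - c^2) * ha + (-(x^2) - c^2) * hb + (-(x^2) - y^2) * hc
    rw [hid]
    have t1 : 0 ≤ (a*b - a*c)^2 := sq_nonneg _
    have t2 : 0 ≤ (b*c - 1)^2 := sq_nonneg _
    have t3 : 0 ≤ 2*(b*c)*(a-1)^2 := by positivity
    linarith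
  · ext ⟨x, y, z⟩
    simp only [Set.mem_setOf_eq, Set.mem_insert_iff, Set.mem_singleton_iff, Prod.mk.injEq]
    constructor
    · intro h
      obtain ⟨hx, hy, hz, hxyz⟩ := cl_key x y z h
      have px : x = 1 ∨ x = -1 := by
        rcases mul_eq_zero.mp (show (x-1)*(x+1) = 0 by linear_combination hx) with h1 | h1
        · left; linarith
        · right; linarith
      have py : y = 1 ∨ y = -1 := by
        rcases mul_eq_zero.mp (show (y-1)*(y+1) = 0 by linear_combination hy) with h1 | h1
        · left; linarith
        · right; linarith
      have pz : z = 1 ∨ z = -1 := by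
        rcases mul_eq_zero.mp (show (z-1)*(z+1) = 0 by linear_combination hz) with h1 | h1
        · left; linarith
        · right; linarith
      rcases px with rfl | rfl <;> rcases py with rfl | rfl <;> rcases pz with rfl | rfl <;>
        (revert hxyz; norm_num)
    · rintro (⟨rfl, rfl, rfl⟩ | ⟨rfl, rfl, rfl⟩ | ⟨rfl, rfl, rfl⟩ | ⟨rfl, rfl, rfl⟩) <;> norm_num
end
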